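/- A rule in set normal form is applicable in a state σ = ⟨Δ; γ; υ⟩ iff for each buffer test (b,t,P) the chunk in buffer b has delay 0, type t, and its value list equals Pθ for the binding substitution θ; in particular, for a matching test in set normal form Pθ = ⟦val⟧ (the sorted enumerative list of the chunk's value function). -/
import Mathlib


abbrev AConst := ℕ
abbrev AVar := ℕ

inductive AVal where
  | const : AConst → AVal
  | var : AVar → AVal
deriving DecidableEq

abbrev Subst := AVar → AConst

def AVal.app (θ : Subst) : AVal → AConst
  | .const c => c
  | .var v => θ v

structure BufferTest where
  buf : AConst
  typ : AConst
  slots : Finset (AConst × AVal)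
deriving DecidableEq

structure ARule (RH : Type) where
  lhs : Finset BufferTest
  rhs : RH

structure Chunk where
  ctyp : AConst
  cval : AConst → AConst

structure AState where
  store : AConst → Option Chunk
  cog : AConst → AConst × NNReal
  info : Prop

def testMatches (σ : AState) (θ : Subst) (t : BufferTest) : Prop :=
  ∃ c : Chunk, σ.store (σ.cog t.buf).1 = some c ∧ (σ.cog t.buf).2 = 0 ∧
    c.ctyp = t.typ ∧ ∀ p ∈ t.slots, c.cval p.1 = p.2.app θ

def ruleMatches {RH} (σ : AState) (θ : Subst) (r : ARule RH) : Prop :=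
  ∀ t ∈ r.lhs, testMatches σ θ t

/-- Set normal form: each slot of τ(t) occurs exactly once, and only those slots. -/
def SNF {RH} (τ : AConst → Finset AConst) (r : ARule RH) : Prop :=
  ∀ t ∈ r.lhs, (∀ s ∈ τ t.typ, ∃! v : AVal, (s, v) ∈ t.slots) ∧
    (∀ p ∈ t.slots, p.1 ∈ τ t.typ)

/-- A rule in set normal form is applicable in a state σ iff for
each buffer test (b,t,P) the chunk in buffer b has delay 0, type t, and its
(sorted enumerative) value list equals Pθ for the binding substitution θ; in
particular, for a matching test in set normal form Pθ = ⟦val⟧. Here ⟦val⟧ is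
represented as the finite set of pairs (s, val(s)) for s ∈ τ(t). -/
theorem snf_matching_characterization
    {RH : Type} (τ : AConst → Finset AConst)
    (r : ARule RH) (hsnf : SNF τ r) (σ : AState) (θ : Subst) :
    ruleMatches σ θ r ↔
      ∀ tst ∈ r.lhs, ∃ c : Chunk,
        σ.store (σ.cog tst.buf).1 = some c ∧
        (σ.cog tst.buf).2 = 0 ∧
        c.ctyp = tst.typ ∧
        tst.slots.image (fun p => (p.1, p.2.app θ)) =
          (τ tst.typ).image (fun s => (s, c.cval s)) := by

  constructor
  · intro h tst htst
    obtain ⟨c, hc, hd, hty, hslots⟩ := h tst htst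
    obtain ⟨huniq, hmem⟩ := hsnf tst htst
    refine ⟨c, hc, hd, hty, ?_⟩
    ext ⟨a, b⟩
    simp only [Finset.mem_image, Prod.mk.injEq]
    constructor
    · rintro ⟨p, hp, rfl, rfl⟩
      exact ⟨p.1, hmem p hp, rfl, hslots p hp⟩
    · rintro ⟨s, hs, rfl, rfl⟩
      obtain ⟨v, hv, -⟩ := huniq s hs
      exact ⟨(s, v), hv, rfl, (hslots (s, v) hv).symm⟩
  · intro h tst htst
    obtain ⟨c, hc, hd, hty, himg⟩ := h tst htst
    refine ⟨c, hc, hd, hty, ?_⟩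
    intro p hp
    have : (p.1, p.2.app θ) ∈ (τ tst.typ).image (fun s => (s, c.cval s)) := by
      rw [← himg]; exact Finset.mem_image_of_mem _ hp
    simp only [Finset.mem_image, Prod.mk.injEq] at this
    obtain ⟨s, hs, rfl, h2⟩ := this
    exact h2
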